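/- Suppose T = (j_1,...,j_n) is a cyclic order on [n] with n ≥ 7, all of whose steps s_i = j_{i+1} − j_i mod n equal 1 or 3, and T is not the standard cyclic order (1,2,...,n). Then T is 4- or 6-interlaced with the standard order: either there exist distinct a,b,c,d appearing in cyclic order a,b,c,d in (1,...,n) and in cyclic order c,b,a,d in T; or there exist distinct a,b,c,d,e,f appearing in cyclic order a,b,c,d,e,f in (1,...,n) and in one of the cyclic orders c,d,a,b,e,f or a,d,e,b,c,f in T. -/

import Mathlib

/-- Four elements appear in this cyclic order in the cyclic sequence `j`. -/
def CycOrd4 {n : ℕ} (j : ℕ → Fin n) (a b c d : Fin n) : Prop :=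
  ∃ t1 t2 t3 t4 : ℕ, t1 < t2 ∧ t2 < t3 ∧ t3 < t4 ∧ t4 < t1 + n ∧
    j t1 = a ∧ j t2 = b ∧ j t3 = c ∧ j t4 = d

/-- Six elements appear in this cyclic order in the cyclic sequence `j`. -/
def CycOrd6 {n : ℕ} (j : ℕ → Fin n) (a b c d e f : Fin n) : Prop :=
  ∃ t1 t2 t3 t4 t5 t6 : ℕ, t1 < t2 ∧ t2 < t3 ∧ t3 < t4 ∧ t4 < t5 ∧ t5 < t6 ∧
    t6 < t1 + n ∧ j t1 = a ∧ j t2 = b ∧ j t3 = c ∧ j t4 = d ∧ j t5 = e ∧ j t6 = f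

set_option maxHeartbeats 2000000 in
/-- A cyclic order on `[n]`, `n ≥ 7`, all of whose steps are `1` or `3` mod `n`
and which is not the standard cyclic order, is `4`- or `6`-interlaced with the
standard order. -/
theorem stmt13 {n : ℕ} (hn : 7 ≤ n) (j : ℕ → Fin n)
    (hper : ∀ t, j (t + n) = j t)
    (hbij : ∀ y : Fin n, ∃! t : ℕ, t < n ∧ j t = y)
    (std : ℕ → Fin n)
    (hstd : ∀ t, std t = ⟨t % n, Nat.mod_lt t (by omega)⟩)
    (h13 : ∀ t, ((j (t + 1)).val + n - (j t).val) % n = 1 ∨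
        ((j (t + 1)).val + n - (j t).val) % n = 3)
    (hnotstd : ¬ ∃ r : ℕ, ∀ t, j t = std (t + r)) :
    (∃ a b c d : Fin n, ([a, b, c, d] : List (Fin n)).Pairwise (· ≠ ·) ∧
        CycOrd4 std a b c d ∧ CycOrd4 j c b a d) ∨
    (∃ a b c d e f : Fin n, ([a, b, c, d, e, f] : List (Fin n)).Pairwise (· ≠ ·) ∧
        CycOrd6 std a b c d e f ∧
        (CycOrd6 j c d a b e f ∨ CycOrd6 j a d e b c f)) := by
  have npos : 0 < n := by omega
  have hvlt : ∀ t, (j t).val < n := fun t => (j t).isLt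
  -- mod helpers
  have modsub : ∀ a : ℕ, a < 2*n → (a % n = a ∧ a < n) ∨ (a % n = a - n ∧ n ≤ a) := by
    intro a ha
    rcases Nat.lt_or_ge a n with h | h
    · exact Or.inl ⟨Nat.mod_eq_of_lt h, h⟩
    · refine Or.inr ⟨?_, h⟩
      rw [Nat.mod_eq_sub_mod h, Nat.mod_eq_of_lt (by omega)]
  have moddvd : ∀ k a : ℕ, k ∣ n → ∃ q, a = a % n + k * q := by
    intro k a hk
    obtain ⟨m, rfl⟩ := hk
    exact ⟨m * (a / (k*m)), by rw [← Nat.mul_assoc, Nat.mod_add_div]⟩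
  have modshift : ∀ x o k : ℕ, (x + (o + n*k)) % n = (x + o) % n := by
    intro x o k
    have h : x + (o + n*k) = (x+o) + n*k := by ring
    rw [h, Nat.add_mul_mod_self_left]
  have modcoll : ∀ x b : ℕ, ((x % n) + b) % n = (x + b) % n := fun x b => Nat.mod_add_mod x n b
  -- step dichotomy
  have steps : ∀ t, (j (t+1)).val = ((j t).val + 1) % n ∨ (j (t+1)).val = ((j t).val + 3) % n := by
    intro t
    have hA := hvlt (t+1); have hB := hvlt t
    rcases modsub ((j (t+1)).val + n - (j t).val) (by omega) with ⟨h1, h2⟩ | ⟨h1, h2⟩ <;>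
      rcases modsub ((j t).val + 1) (by omega) with ⟨h3, h4⟩ | ⟨h3, h4⟩ <;>
      rcases modsub ((j t).val + 3) (by omega) with ⟨h5, h6⟩ | ⟨h5, h6⟩ <;>
      rcases h13 t with h | h <;> omega
  -- periodicity
  have hperk : ∀ k t, j (t + n*k) = j t := by
    intro k
    induction k with
    | zero => simp
    | succ k ih =>
      intro t
      have h : t + n*(k+1) = (t + n*k) + n := by ring
      rw [h, hper, ih]
  have jmod : ∀ t, j (t % n) = j t := by
    intro t
    conv_rhs => rw [← Nat.mod_add_div t n]
    exact (hperk (t/n) (t % n)).symm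
  have injmod : ∀ t t', j t = j t' → t % n = t' % n := by
    intro t t' h
    obtain ⟨u, _, huniq⟩ := hbij (j t)
    have h1 := huniq (t % n) ⟨Nat.mod_lt t npos, jmod t⟩
    have h2 := huniq (t' % n) ⟨Nat.mod_lt t' npos, by rw [jmod]; exact h.symm⟩
    rw [h1, h2]
  have jeqmod : ∀ t t' : ℕ, t % n = t' % n → j t = j t' := by
    intro t t' h
    rw [← jmod t, ← jmod t', h]
  have jsucc : ∀ t t', j t = j t' → j (t+1) = j (t'+1) := by
    intro t t' h
    exact jeqmod _ _ (Nat.ModEq.add_right 1 (injmod _ _ h))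
  have exval : ∀ v : ℕ, ∃ t, t < n ∧ (j t).val = v % n := by
    intro v
    obtain ⟨t, ⟨h1, h2⟩, _⟩ := hbij ⟨v % n, Nat.mod_lt v npos⟩
    exact ⟨t, h1, by rw [h2]⟩
  -- key two-step propagation
  have key2 : ∀ t t', (j t').val = ((j t).val + 2) % n →
      ((j (t+1)).val = ((j t).val + 3) % n ↔ (j (t'+1)).val = ((j t').val + 3) % n) := by
    intro t t' h
    have hx := hvlt t; have hx' := hvlt t'
    constructor
    · intro h3
      rcases steps t' with h1' | h3'
      · exfalso
        have e1 : (j (t'+1)).val = ((j t).val + 3) % n := by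
          rw [h1', h, modcoll]
        have e2 : j (t+1) = j (t'+1) := Fin.ext (h3.trans e1.symm)
        have e3 : t % n = t' % n :=
          Nat.ModEq.add_right_cancel' 1 (injmod _ _ e2)
        have e4 : j t = j t' := jeqmod _ _ e3
        have e5 : (j t).val = ((j t).val + 2) % n := by rw [← h, e4]
        rcases modsub ((j t).val + 2) (by omega) with ⟨h5, h6⟩ | ⟨h5, h6⟩ <;> omega
      · exact h3'
    · intro h3'
      rcases steps t with h1 | h3
      · exfalso
        obtain ⟨u0, hu0n, hu0⟩ := exval ((j t).val + 3)
        have hu1 : j ((u0 + n - 1) + 1) = j u0 := by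
          have h : (u0 + n - 1) + 1 = u0 + n*1 := by omega
          rw [h]; exact hperk 1 u0
        set u := u0 + n - 1 with hu
        have hyu := hvlt u
        rcases steps u with hA | hB
        · have h5 : (j u).val = ((j t).val + 2) % n := by
            have e1 : (j (u+1)).val = ((j t).val + 3) % n := by rw [hu1]; exact hu0
            rcases modsub ((j u).val + 1) (by omega) with ⟨e2, e3⟩ | ⟨e2, e3⟩ <;>
              rcases modsub ((j t).val + 3) (by omega) with ⟨e4, e5⟩ | ⟨e4, e5⟩ <;>
              rcases modsub ((j t).val + 2) (by omega) with ⟨e6, e7⟩ | ⟨e6, e7⟩ <;> omega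
        -- j u = j t', so j (u+1) = j (t'+1)
          have e6 : j u = j t' := Fin.ext (h5.trans h.symm)
          have e7 : j (u+1) = j (t'+1) := jsucc _ _ e6
          have e8 : (j (t'+1)).val = ((j t).val + 5) % n := by
            rw [h3', h, modcoll]
          have e9 : (j (u+1)).val = ((j t).val + 3) % n := by rw [hu1]; exact hu0
          rw [e7, e8] at e9
          rcases modsub ((j t).val + 3) (by omega) with ⟨e4, e5⟩ | ⟨e4, e5⟩ <;>
            rcases modsub ((j t).val + 5) (by omega) with ⟨f4, f5⟩ | ⟨f4, f5⟩ <;> omega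
        · have h5 : (j u).val = (j t).val := by
            have e1 : (j (u+1)).val = ((j t).val + 3) % n := by rw [hu1]; exact hu0
            rcases modsub ((j u).val + 3) (by omega) with ⟨e2, e3⟩ | ⟨e2, e3⟩ <;>
              rcases modsub ((j t).val + 3) (by omega) with ⟨e4, e5⟩ | ⟨e4, e5⟩ <;> omega
          have e6 : j u = j t := Fin.ext h5
          have e7 : j (u+1) = j (t+1) := jsucc _ _ e6
          have e9 : (j (u+1)).val = ((j t).val + 3) % n := by rw [hu1]; exact hu0
          rw [e7, h1] at e9
          rcases modsub ((j t).val + 3) (by omega) with ⟨e4, e5⟩ | ⟨e4, e5⟩ <;>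
            rcases modsub ((j t).val + 1) (by omega) with ⟨f4, f5⟩ | ⟨f4, f5⟩ <;> omega
      · exact h3
  -- same-value propagation
  have keyeq : ∀ t t', j t = j t' →
      ((j (t+1)).val = ((j t).val + 3) % n ↔ (j (t'+1)).val = ((j t').val + 3) % n) := by
    intro t t' h
    rw [jsucc _ _ h, h]
  -- chain propagation
  have chain : ∀ k t t', (j t').val = ((j t).val + 2*k) % n →
      ((j (t+1)).val = ((j t).val + 3) % n ↔ (j (t'+1)).val = ((j t').val + 3) % n) := by
    intro k
    induction k with
    | zero =>
      intro t t' h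
      have h2 : (j t').val = (j t).val := by
        rw [h]; simp [Nat.mod_eq_of_lt (hvlt t)]
      exact keyeq _ _ (Fin.ext h2.symm)
    | succ k ih =>
      intro t t' h
      obtain ⟨u, hun, hu⟩ := exval ((j t).val + 2*k)
      have e : (j t').val = ((j u).val + 2) % n := by
        have harg : (j t).val + 2*(k+1) = ((j t).val + 2*k) + 2 := by ring
        rw [h, harg, hu, modcoll]
      exact (ih t u hu).trans (key2 u t' e)
  -- difference realisation
  have hdiff : ∀ t t', ((j t).val + (((j t').val + n - (j t).val) % n)) % n = (j t').val := by
    intro t t'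
    have hx := hvlt t; have hx' := hvlt t'
    have h1 : ((j t).val + (((j t').val + n - (j t).val) % n)) % n
        = ((j t).val + ((j t').val + n - (j t).val)) % n := Nat.add_mod_mod _ _ _
    rw [h1]
    have h2 : (j t).val + ((j t').val + n - (j t).val) = (j t').val + n := by omega
    rw [h2, Nat.add_mod_right, Nat.mod_eq_of_lt hx']
  -- odd n: all steps alike
  have oddall : n % 2 = 1 → ∀ t t',
      ((j (t+1)).val = ((j t).val + 3) % n ↔ (j (t'+1)).val = ((j t').val + 3) % n) := by
    intro hodd t t'
    set d := ((j t').val + n - (j t).val) % n with hd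
    apply chain (d * ((n+1)/2))
    have h1 : 2 * (d * ((n+1)/2)) = d + d * n := by
      have h2 : 2 * ((n+1)/2) = n+1 := by omega
      calc 2 * (d * ((n+1)/2)) = d * (2 * ((n+1)/2)) := by ring
        _ = d * (n+1) := by rw [h2]
        _ = d + d * n := by ring
    rw [h1, ← Nat.add_assoc, Nat.add_mul_mod_self_right, hd]
    exact (hdiff t t').symm
  -- even n: steps alike on parity classes
  have hpar : n % 2 = 0 → ∀ t t', (j t).val % 2 = (j t').val % 2 →
      ((j (t+1)).val = ((j t).val + 3) % n ↔ (j (t'+1)).val = ((j t').val + 3) % n) := by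
    intro he t t' hp
    set d := ((j t').val + n - (j t).val) % n with hd
    have hx := hvlt t; have hx' := hvlt t'
    have hdev : d % 2 = 0 := by
      obtain ⟨q, hq⟩ := moddvd 2 ((j t').val + n - (j t).val) (by omega)
      rw [hd]; omega
    apply chain (d / 2)
    have h1 : 2 * (d/2) = d := by omega
    rw [h1, hd]
    exact (hdiff t t').symm

  set z := (j 0).val with hzdef
  have hzlt : z < n := hvlt 0
  have hvne : ∀ o1 o2 : ℕ, o1 < n → o2 < n → o1 ≠ o2 → (z+o1) % n ≠ (z+o2) % n := by
    intro o1 o2 h1 h2 h12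
    rcases modsub (z+o1) (by omega) with ⟨e1,e2⟩|⟨e1,e2⟩ <;>
      rcases modsub (z+o2) (by omega) with ⟨f1,f2⟩|⟨f1,f2⟩ <;> omega
  -- all-ones yields the standard order: contradiction
  have hones : ¬ (∀ t, (j (t+1)).val = ((j t).val + 1) % n) := by
    intro hallone
    refine hnotstd ⟨z, fun t => ?_⟩
    have hcf : ∀ t, (j t).val = (z + t) % n := by
      intro t
      induction t with
      | zero => simp [Nat.mod_eq_of_lt hzlt]; exact hzdef.symm
      | succ t ih =>
        rw [hallone t, ih, modcoll, Nat.add_assoc]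
    rw [hstd]
    exact Fin.ext (by rw [hcf]; congr 1; ring)
  have hp01 : n % 2 = 0 → (j 1).val % 2 ≠ (j 0).val % 2 := by
    intro he
    obtain ⟨q1, e1⟩ := moddvd 2 ((j 0).val + 1) (by omega)
    obtain ⟨q2, e2⟩ := moddvd 2 ((j 0).val + 3) (by omega)
    have hl := hvlt 0
    have hs : (j 1).val = ((j 0).val + 1) % n ∨ (j 1).val = ((j 0).val + 3) % n := steps 0
    rcases hs with h | h <;> rw [h] <;> omega
  -- main classification
  have main : (∀ t, (j (t+1)).val = ((j t).val + 3) % n) ∨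
      (n % 2 = 0 ∧
        ((((j 1).val = ((j 0).val + 3) % n) ∧ ¬((j 2).val = ((j 1).val + 3) % n)) ∨
         ((¬((j 1).val = ((j 0).val + 3) % n)) ∧ ((j 2).val = ((j 1).val + 3) % n)))) := by
    have hn2 : n % 2 = 0 ∨ n % 2 = 1 := by omega
    rcases hn2 with he | ho
    · by_cases h0 : (j 1).val = ((j 0).val + 3) % n <;>
        by_cases h1 : (j 2).val = ((j 1).val + 3) % n
      · left
        intro t
        have hp : (j t).val % 2 = (j 0).val % 2 ∨ (j t).val % 2 = (j 1).val % 2 := by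
          have := hp01 he; omega
        rcases hp with hp | hp
        · exact (hpar he 0 t hp.symm).mp h0
        · exact (hpar he 1 t hp.symm).mp h1
      · exact Or.inr ⟨he, Or.inl ⟨h0, h1⟩⟩
      · exact Or.inr ⟨he, Or.inr ⟨h0, h1⟩⟩
      · exfalso
        apply hones
        intro t
        refine (steps t).resolve_right (fun h3 => ?_)
        have hp : (j t).val % 2 = (j 0).val % 2 ∨ (j t).val % 2 = (j 1).val % 2 := by
          have := hp01 he; omega
        rcases hp with hp | hp
        · exact h0 ((hpar he t 0 hp).mp h3)
        · exact h1 ((hpar he t 1 hp).mp h3)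
    · by_cases h0 : (j 1).val = ((j 0).val + 3) % n
      · exact Or.inl (fun t => (oddall ho 0 t).mp h0)
      · exfalso
        apply hones
        intro t
        exact (steps t).resolve_right (fun h3 => h0 ((oddall ho t 0).mp h3))
  rcases main with hall3 | ⟨he, hAB⟩
  · -- Family I : all steps 3
    have hcf : ∀ t, (j t).val = (z + 3*t) % n := by
      intro t
      induction t with
      | zero => simp [Nat.mod_eq_of_lt hzlt]; exact hzdef.symm
      | succ t ih =>
        rw [hall3 t, ih, modcoll, show z + 3*t + 3 = z + 3*(t+1) from by ring]
    have hn3 : n % 3 = 0 ∨ n % 3 = 1 ∨ n % 3 = 2 := by omega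
    rcases hn3 with h3 | h3 | h3
    · exfalso
      obtain ⟨t, htn, ht⟩ := exval (z+1)
      rw [hcf] at ht
      obtain ⟨q1, e1⟩ := moddvd 3 (z+3*t) (by omega)
      obtain ⟨q2, e2⟩ := moddvd 3 (z+1) (by omega)
      omega
    · -- n ≡ 1 mod 3
      left
      refine ⟨⟨(z+1) % n, Nat.mod_lt _ npos⟩, ⟨(z+2) % n, Nat.mod_lt _ npos⟩,
        ⟨(z+3) % n, Nat.mod_lt _ npos⟩, ⟨(z+0) % n, Nat.mod_lt _ npos⟩, ?_, ?_, ?_⟩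
      · simp only [List.pairwise_cons, List.mem_cons, List.mem_singleton, List.not_mem_nil,
          List.Pairwise.nil, and_true, or_false, ne_eq]
        refine ⟨fun a' ha' => ?_, fun a' ha' => ?_, fun a' ha' => ?_, by simp⟩ <;>
          [rcases ha' with rfl|rfl|rfl; rcases ha' with rfl|rfl; rcases ha' with rfl] <;>
          exact fun hh => hvne _ _ (by omega) (by omega) (by omega) (congrArg Fin.val hh)
      · exact ⟨z+1, z+2, z+3, z+n, by omega, by omega, by omega, by omega,
          by rw [hstd], by rw [hstd], by rw [hstd],
          by rw [hstd]; apply Fin.ext;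
             exact (by rw [show z+n = (z+0)+n from by ring, Nat.add_mod_right] :
               (z+n) % n = (z+0) % n)⟩
      · refine ⟨1, (n+2)/3, (2*n+1)/3, n, by omega, by omega, by omega, by omega, ?_, ?_, ?_, ?_⟩
        · apply Fin.ext
          show (j 1).val = (z+3) % n
          rw [hcf, show z + 3*1 = z + (3 + n*0) from by ring, modshift]
        · apply Fin.ext
          show (j ((n+2)/3)).val = (z+2) % n
          rw [hcf, show z + 3*((n+2)/3) = z + (2 + n*1) from by omega, modshift]
        · apply Fin.ext
          show (j ((2*n+1)/3)).val = (z+1) % n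
          rw [hcf, show z + 3*((2*n+1)/3) = z + (1 + n*2) from by omega, modshift]
        · apply Fin.ext
          show (j n).val = (z+0) % n
          rw [hcf, show z + 3*n = z + (0 + n*3) from by omega, modshift]
    · -- n ≡ 2 mod 3
      left
      refine ⟨⟨(z+0) % n, Nat.mod_lt _ npos⟩, ⟨(z+2) % n, Nat.mod_lt _ npos⟩,
        ⟨(z+4) % n, Nat.mod_lt _ npos⟩, ⟨(z+6) % n, Nat.mod_lt _ npos⟩, ?_, ?_, ?_⟩
      · simp only [List.pairwise_cons, List.mem_cons, List.mem_singleton, List.not_mem_nil,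
          List.Pairwise.nil, and_true, or_false, ne_eq]
        refine ⟨fun a' ha' => ?_, fun a' ha' => ?_, fun a' ha' => ?_, by simp⟩ <;>
          [rcases ha' with rfl|rfl|rfl; rcases ha' with rfl|rfl; rcases ha' with rfl] <;>
          exact fun hh => hvne _ _ (by omega) (by omega) (by omega) (congrArg Fin.val hh)
      · exact ⟨z, z+2, z+4, z+6, by omega, by omega, by omega, by omega,
          by rw [hstd]; rfl, by rw [hstd], by rw [hstd], by rw [hstd]⟩
      · refine ⟨(n+4)/3, (2*n+2)/3, n, n+2, by omega, by omega, by omega, by omega,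
          ?_, ?_, ?_, ?_⟩
        · apply Fin.ext
          show (j ((n+4)/3)).val = (z+4) % n
          rw [hcf, show z + 3*((n+4)/3) = z + (4 + n*1) from by omega, modshift]
        · apply Fin.ext
          show (j ((2*n+2)/3)).val = (z+2) % n
          rw [hcf, show z + 3*((2*n+2)/3) = z + (2 + n*2) from by omega, modshift]
        · apply Fin.ext
          show (j n).val = (z+0) % n
          rw [hcf, show z + 3*n = z + (0 + n*3) from by omega, modshift]
        · apply Fin.ext
          show (j (n+2)).val = (z+6) % n
          rw [hcf, show z + 3*(n+2) = z + (6 + n*3) from by omega, modshift]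
  · rcases hAB with ⟨h30, h11⟩ | ⟨h10, h31⟩
    · -- Family B : pairs (z+4t, z+4t+3)
      have hj1 : (j 1).val = (z+3) % n := h30
      have hcf : ∀ t, (j (2*t)).val = (z + 4*t) % n ∧ (j (2*t+1)).val = (z + 4*t + 3) % n := by
        intro t
        induction t with
        | zero =>
          refine ⟨?_, ?_⟩
          · show (j 0).val = (z + 4*0) % n
            simp [Nat.mod_eq_of_lt hzlt]; exact hzdef.symm
          · show (j 1).val = (z + 4*0 + 3) % n
            simpa using hj1
        | succ t ih =>
          obtain ⟨ih1, ih2⟩ := ih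
          have hp : (j (2*t+1)).val % 2 = (j 1).val % 2 := by
            obtain ⟨q1, e1⟩ := moddvd 2 (z+4*t+3) (by omega)
            obtain ⟨q2, e2⟩ := moddvd 2 (z+3) (by omega)
            rw [ih2, hj1]
            omega
          have hs : ¬ ((j (2*t+1+1)).val = ((j (2*t+1)).val + 3) % n) := by
            intro h
            exact h11 ((hpar he (2*t+1) 1 hp).mp h)
          have p1 : (j (2*t+1+1)).val = ((j (2*t+1)).val + 1) % n :=
            (steps (2*t+1)).resolve_right hs
          have first : (j (2*(t+1))).val = (z + 4*(t+1)) % n := by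
            rw [show 2*(t+1) = 2*t+1+1 from by ring, p1, ih2, modcoll,
              show z + 4*t + 3 + 1 = z + 4*(t+1) from by ring]
          refine ⟨first, ?_⟩
          have hp2 : (j 0).val % 2 = (j (2*(t+1))).val % 2 := by
            obtain ⟨q1, e1⟩ := moddvd 2 (z+4*(t+1)) (by omega)
            rw [first]
            omega
          have hs3 : (j (2*(t+1)+1)).val = ((j (2*(t+1))).val + 3) % n :=
            (hpar he 0 (2*(t+1)) hp2).mp h30
          rw [hs3, first, modcoll]
      have hn4 : n % 4 = 0 ∨ n % 4 = 2 := by omega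
      rcases hn4 with h4 | h4
      · exfalso
        obtain ⟨t, htn, ht⟩ := exval (z+2)
        have hsplit : t = 2*(t/2) ∨ t = 2*(t/2)+1 := by omega
        rcases hsplit with hs | hs
        · have h1 := (hcf (t/2)).1
          rw [← hs] at h1
          rw [h1] at ht
          obtain ⟨q1, e1⟩ := moddvd 4 (z+4*(t/2)) (by omega)
          obtain ⟨q2, e2⟩ := moddvd 4 (z+2) (by omega)
          omega
        · have h1 := (hcf (t/2)).2
          rw [← hs] at h1
          rw [h1] at ht
          obtain ⟨q1, e1⟩ := moddvd 2 (z+4*(t/2)+3) (by omega)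
          obtain ⟨q2, e2⟩ := moddvd 2 (z+2) (by omega)
          omega
      · right
        refine ⟨⟨(z+0) % n, Nat.mod_lt _ npos⟩, ⟨(z+1) % n, Nat.mod_lt _ npos⟩,
          ⟨(z+2) % n, Nat.mod_lt _ npos⟩, ⟨(z+3) % n, Nat.mod_lt _ npos⟩,
          ⟨(z+4) % n, Nat.mod_lt _ npos⟩, ⟨(z+5) % n, Nat.mod_lt _ npos⟩, ?_, ?_, Or.inr ?_⟩
        · simp only [List.pairwise_cons, List.mem_cons, List.mem_singleton, List.not_mem_nil,
            List.Pairwise.nil, and_true, or_false, ne_eq]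
          refine ⟨fun a' ha' => ?_, fun a' ha' => ?_, fun a' ha' => ?_, fun a' ha' => ?_,
              fun a' ha' => ?_, by simp⟩ <;>
            [rcases ha' with rfl|rfl|rfl|rfl|rfl; rcases ha' with rfl|rfl|rfl|rfl;
             rcases ha' with rfl|rfl|rfl; rcases ha' with rfl|rfl; rcases ha' with rfl] <;>
            exact fun hh => hvne _ _ (by omega) (by omega) (by omega) (congrArg Fin.val hh)
        · exact ⟨z+0, z+1, z+2, z+3, z+4, z+5, by omega, by omega, by omega, by omega,
            by omega, by omega, by rw [hstd], by rw [hstd], by rw [hstd], by rw [hstd],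
            by rw [hstd], by rw [hstd]⟩
        · refine ⟨0, 1, 2, n/2, n/2+1, n/2+2, by omega, by omega, by omega, by omega,
            by omega, by omega, ?_, ?_, ?_, ?_, ?_, ?_⟩
          · exact Fin.ext ((hcf 0).1)
          · exact Fin.ext ((hcf 0).2)
          · exact Fin.ext ((hcf 1).1)
          · apply Fin.ext
            have h1 := (hcf ((n-2)/4)).2
            rw [show 2*((n-2)/4)+1 = n/2 from by omega] at h1
            show (j (n/2)).val = (z+1) % n
            rw [h1, show z + 4*((n-2)/4) + 3 = z + (1 + n*1) from by omega, modshift]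
          · apply Fin.ext
            have h1 := (hcf ((n+2)/4)).1
            rw [show 2*((n+2)/4) = n/2+1 from by omega] at h1
            show (j (n/2+1)).val = (z+2) % n
            rw [h1, show z + 4*((n+2)/4) = z + (2 + n*1) from by omega, modshift]
          · apply Fin.ext
            have h1 := (hcf ((n+2)/4)).2
            rw [show 2*((n+2)/4)+1 = n/2+2 from by omega] at h1
            show (j (n/2+2)).val = (z+5) % n
            rw [h1, show z + 4*((n+2)/4) + 3 = z + (5 + n*1) from by omega, modshift]
    · -- Family A : pairs (z+4t, z+4t+1)
      have hj1 : (j 1).val = (z+1) % n := (steps 0).resolve_right h10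
      have hcf : ∀ t, (j (2*t)).val = (z + 4*t) % n ∧ (j (2*t+1)).val = (z + 4*t + 1) % n := by
        intro t
        induction t with
        | zero =>
          refine ⟨?_, ?_⟩
          · show (j 0).val = (z + 4*0) % n
            simp [Nat.mod_eq_of_lt hzlt]; exact hzdef.symm
          · show (j 1).val = (z + 4*0 + 1) % n
            simpa using hj1
        | succ t ih =>
          obtain ⟨ih1, ih2⟩ := ih
          have hp : (j 1).val % 2 = (j (2*t+1)).val % 2 := by
            obtain ⟨q1, e1⟩ := moddvd 2 (z+4*t+1) (by omega)
            obtain ⟨q2, e2⟩ := moddvd 2 (z+1) (by omega)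
            rw [ih2, hj1]
            omega
          have p3 : (j (2*t+1+1)).val = ((j (2*t+1)).val + 3) % n :=
            (hpar he 1 (2*t+1) hp).mp h31
          have first : (j (2*(t+1))).val = (z + 4*(t+1)) % n := by
            rw [show 2*(t+1) = 2*t+1+1 from by ring, p3, ih2, modcoll,
              show z + 4*t + 1 + 3 = z + 4*(t+1) from by ring]
          refine ⟨first, ?_⟩
          have hp2 : (j (2*(t+1))).val % 2 = (j 0).val % 2 := by
            obtain ⟨q1, e1⟩ := moddvd 2 (z+4*(t+1)) (by omega)
            rw [first]
            omega
          have hs : ¬ ((j (2*(t+1)+1)).val = ((j (2*(t+1))).val + 3) % n) := by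
            intro h
            exact h10 ((hpar he (2*(t+1)) 0 hp2).mp h)
          have p1 : (j (2*(t+1)+1)).val = ((j (2*(t+1))).val + 1) % n :=
            (steps (2*(t+1))).resolve_right hs
          rw [p1, first, modcoll]
      have hn4 : n % 4 = 0 ∨ n % 4 = 2 := by omega
      rcases hn4 with h4 | h4
      · exfalso
        obtain ⟨t, htn, ht⟩ := exval (z+2)
        have hsplit : t = 2*(t/2) ∨ t = 2*(t/2)+1 := by omega
        rcases hsplit with hs | hs
        · have h1 := (hcf (t/2)).1
          rw [← hs] at h1
          rw [h1] at ht
          obtain ⟨q1, e1⟩ := moddvd 4 (z+4*(t/2)) (by omega)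
          obtain ⟨q2, e2⟩ := moddvd 4 (z+2) (by omega)
          omega
        · have h1 := (hcf (t/2)).2
          rw [← hs] at h1
          rw [h1] at ht
          obtain ⟨q1, e1⟩ := moddvd 2 (z+4*(t/2)+1) (by omega)
          obtain ⟨q2, e2⟩ := moddvd 2 (z+2) (by omega)
          omega
      · right
        refine ⟨⟨(z+0) % n, Nat.mod_lt _ npos⟩, ⟨(z+1) % n, Nat.mod_lt _ npos⟩,
          ⟨(z+2) % n, Nat.mod_lt _ npos⟩, ⟨(z+3) % n, Nat.mod_lt _ npos⟩,
          ⟨(z+4) % n, Nat.mod_lt _ npos⟩, ⟨(z+5) % n, Nat.mod_lt _ npos⟩, ?_, ?_, Or.inl ?_⟩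
        · simp only [List.pairwise_cons, List.mem_cons, List.mem_singleton, List.not_mem_nil,
            List.Pairwise.nil, and_true, or_false, ne_eq]
          refine ⟨fun a' ha' => ?_, fun a' ha' => ?_, fun a' ha' => ?_, fun a' ha' => ?_,
              fun a' ha' => ?_, by simp⟩ <;>
            [rcases ha' with rfl|rfl|rfl|rfl|rfl; rcases ha' with rfl|rfl|rfl|rfl;
             rcases ha' with rfl|rfl|rfl; rcases ha' with rfl|rfl; rcases ha' with rfl] <;>
            exact fun hh => hvne _ _ (by omega) (by omega) (by omega) (congrArg Fin.val hh)
        · exact ⟨z+0, z+1, z+2, z+3, z+4, z+5, by omega, by omega, by omega, by omega,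
            by omega, by omega, by rw [hstd], by rw [hstd], by rw [hstd], by rw [hstd],
            by rw [hstd], by rw [hstd]⟩
        · refine ⟨(n+2)/2, (n+4)/2, n, n+1, n+2, n+3, by omega, by omega, by omega,
            by omega, by omega, by omega, ?_, ?_, ?_, ?_, ?_, ?_⟩
          · apply Fin.ext
            have h1 := (hcf ((n+2)/4)).1
            rw [show 2*((n+2)/4) = (n+2)/2 from by omega] at h1
            show (j ((n+2)/2)).val = (z+2) % n
            rw [h1, show z + 4*((n+2)/4) = z + (2 + n*1) from by omega, modshift]
          · apply Fin.ext
            have h1 := (hcf ((n+2)/4)).2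
            rw [show 2*((n+2)/4)+1 = (n+4)/2 from by omega] at h1
            show (j ((n+4)/2)).val = (z+3) % n
            rw [h1, show z + 4*((n+2)/4) + 1 = z + (3 + n*1) from by omega, modshift]
          · apply Fin.ext
            have h1 := (hcf (n/2)).1
            rw [show 2*(n/2) = n from by omega] at h1
            show (j n).val = (z+0) % n
            rw [h1, show z + 4*(n/2) = z + (0 + n*2) from by omega, modshift]
          · apply Fin.ext
            have h1 := (hcf (n/2)).2
            rw [show 2*(n/2)+1 = n+1 from by omega] at h1
            show (j (n+1)).val = (z+1) % n
            rw [h1, show z + 4*(n/2) + 1 = z + (1 + n*2) from by omega, modshift]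
          · apply Fin.ext
            have h1 := (hcf ((n+2)/2)).1
            rw [show 2*((n+2)/2) = n+2 from by omega] at h1
            show (j (n+2)).val = (z+4) % n
            rw [h1, show z + 4*((n+2)/2) = z + (4 + n*2) from by omega, modshift]
          · apply Fin.ext
            have h1 := (hcf ((n+2)/2)).2
            rw [show 2*((n+2)/2)+1 = n+3 from by omega] at h1
            show (j (n+3)).val = (z+5) % n
            rw [h1, show z + 4*((n+2)/2) + 1 = z + (5 + n*2) from by omega, modshift]
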